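/- Let q > 1. For every x > 0, the inequality (ψ_q'(x))² + ψ_q''(x) > 0 holds. -/

import Mathlib

open Real Set Filter Topology

/-- The q-digamma function for `q > 1`:
`ψ_q(x) = −ln(q−1) + (ln q)·(x − 1/2 − ∑_{k=1}^∞ q^{−kx}/(1 − q^{−k}))`. -/
noncomputable def qDigammaGt (q x : ℝ) : ℝ :=
  -Real.log (q - 1) +
    Real.log q *
      (x - 1 / 2 - ∑' k : ℕ, q ^ (-(((k : ℝ) + 1) * x)) / (1 - q ^ (-((k : ℝ) + 1))))


lemma aux_exp_mono : ∀ u : ℝ, 0 ≤ u → 0 ≤ (2 + u) * Real.exp (-u) + u - 2 := by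
  have hder : ∀ v : ℝ, HasDerivAt (fun v : ℝ => (2 + v) * Real.exp (-v) + v - 2)
      (1 - (1 + v) * Real.exp (-v)) v := by
    intro v
    have h1 : HasDerivAt (fun v : ℝ => 2 + v) 1 v := (hasDerivAt_id v).const_add 2
    have h2 : HasDerivAt (fun v : ℝ => Real.exp (-v)) (-Real.exp (-v)) v := by
      simpa using (hasDerivAt_neg v).exp
    have h4 := ((h1.mul h2).add (hasDerivAt_id v)).sub_const 2
    exact h4.congr_deriv (by ring)
  have hmono : Monotone (fun v : ℝ => (2 + v) * Real.exp (-v) + v - 2) := by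
    apply monotone_of_deriv_nonneg
    · exact fun v => (hder v).differentiableAt
    · intro v
      rw [(hder v).deriv]
      have h6 : v + 1 ≤ Real.exp v := Real.add_one_le_exp v
      have h7 : 0 < Real.exp (-v) := Real.exp_pos _
      have h5 : (1 + v) * Real.exp (-v) ≤ 1 := by
        calc (1 + v) * Real.exp (-v) ≤ Real.exp v * Real.exp (-v) :=
              mul_le_mul_of_nonneg_right (by linarith) h7.le
          _ = 1 := by rw [← Real.exp_add]; simp
      linarith
  intro u hu
  simpa using hmono hu

lemma aux_half_bound {u : ℝ} (hu : 0 < u) : (1 + u / 2) * (1 - Real.exp (-u)) ≤ u := by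
  have h := aux_exp_mono u hu.le
  nlinarith [Real.exp_pos (-u)]

lemma aux_poly {r y : ℝ} (hr0 : 0 ≤ r) (hr1 : r ≤ 1) (hy0 : 0 ≤ y) (hy1 : y ≤ 1) :
    (3*y - 1) * (1 - y) * (1 - r*y)^2 ≤
      (1 - r)*y*(1 - r*y)^2 + 2*r*y*(1-y)^2*(1 - r*y) + (1-r)*r*y*(1-y)^2 := by
  have hr' : (0:ℝ) ≤ 1 - r := by linarith
  have hy' : (0:ℝ) ≤ 1 - y := by linarith
  have h1 : 0 ≤ (1-y)^4 := by positivity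
  have h2 : 0 ≤ ((1-r)*(1+r)*y)*(1-y)^3 :=
    mul_nonneg (mul_nonneg (mul_nonneg hr' (by linarith)) hy0) (by positivity)
  have h3 : 0 ≤ (1-r)^3*y^3 := mul_nonneg (by positivity) (by positivity)
  nlinarith [h1, h2, h3]


lemma hasSum1 {s : ℝ} (h1 : |s| < 1) :
    HasSum (fun j : ℕ => ((j : ℝ) + 1) * s ^ (j + 1)) (s / (1 - s) ^ 2) := by
  have h := hasSum_coe_mul_geometric_of_norm_lt_one (𝕜 := ℝ) (by simpa using h1)
  have h' := (hasSum_nat_add_iff' (f := fun n : ℕ => (n : ℝ) * s ^ n) 1).2 h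
  simpa [Finset.sum_range_one] using h'

lemma hasSum2 {s : ℝ} (h1 : |s| < 1) :
    HasSum (fun j : ℕ => ((j : ℝ) + 1) ^ 2 * s ^ (j + 1)) (s * (1 + s) / (1 - s) ^ 3) := by
  have hs : ‖s‖ < 1 := by simpa using h1
  have h2 : HasSum (fun n : ℕ => (((n + 2).choose 2 : ℕ) : ℝ) * s ^ n) (1 / (1 - s) ^ 3) := by
    simpa using hasSum_choose_mul_geometric_of_norm_lt_one (𝕜 := ℝ) 2 hs
  have h3 := h2.mul_left (2 * s)
  have h4 : HasSum (fun n : ℕ => ((n : ℝ) + 1) * ((n : ℝ) + 2) * s ^ (n + 1))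
      (2 * s * (1 / (1 - s) ^ 3)) := by
    have hf : ∀ n : ℕ, 2 * s * ((((n + 2).choose 2 : ℕ) : ℝ) * s ^ n) = ((n : ℝ) + 1) * ((n : ℝ) + 2) * s ^ (n + 1) := by
      intro n; rw [Nat.cast_choose_two]; push_cast; ring
    simpa only [hf] using h3
  have h5 := h4.sub (hasSum1 h1)
  have hne : (1 : ℝ) - s ≠ 0 := by
    intro h; rw [sub_eq_zero] at h; rw [← h] at h1; simp at h1
  have hfun : (fun b : ℕ => ((b : ℝ) + 1) * ((b : ℝ) + 2) * s ^ (b + 1) - ((b : ℝ) + 1) * s ^ (b + 1))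
      = fun j : ℕ => ((j : ℝ) + 1) ^ 2 * s ^ (j + 1) := by
    funext b; ring
  rw [hfun] at h5
  have hval : 2 * s * (1 / (1 - s) ^ 3) - s / (1 - s) ^ 2 = s * (1 + s) / (1 - s) ^ 3 := by
    field_simp; ring
  rwa [hval] at h5

section
variable {L r : ℝ} (hL : 0 < L) (hr0 : 0 < r) (hr1 : r < 1)

include hr0 hr1 in
lemma s_mem {y : ℝ} (hy0 : 0 < y) (hy1 : y < 1) (m : ℕ) :
    0 < y * r ^ m ∧ y * r ^ m < 1 := by
  have h1 : (0:ℝ) < r ^ m := pow_pos hr0 m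
  have h2 : r ^ m ≤ 1 := pow_le_one₀ hr0.le hr1.le
  constructor
  · positivity
  · nlinarith

include hL hr0 hr1 in
lemma summableA {y : ℝ} (hy0 : 0 < y) (hy1 : y < 1) :
    Summable (fun m : ℕ => L * (y * r ^ m) / (1 - y * r ^ m) ^ 2) := by
  apply Summable.of_nonneg_of_le (fun m => ?_) (fun m => ?_)
    (((summable_geometric_of_lt_one hr0.le hr1)).mul_left (L * y / (1 - y) ^ 2))
  · have h := s_mem hr0 hr1 hy0 hy1 m
    have h1 := h.1; have h2 := h.2
    positivity
  · have h := s_mem hr0 hr1 hy0 hy1 m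
    have h2 : (1 - y) ^ 2 ≤ (1 - y * r ^ m) ^ 2 := by
      have h3 : y * r ^ m ≤ y := by
        have : r ^ m ≤ 1 := pow_le_one₀ hr0.le hr1.le
        nlinarith
      nlinarith [h.2]
    have hy2 : (0:ℝ) < (1 - y)^2 := by nlinarith
    calc L * (y * r ^ m) / (1 - y * r ^ m) ^ 2
        ≤ L * (y * r ^ m) / (1 - y) ^ 2 :=
          div_le_div_of_nonneg_left (by positivity) hy2 h2
      _ = L * y / (1 - y) ^ 2 * r ^ m := by ring

include hL hr0 hr1 in
lemma fubiniA {y : ℝ} (hy0 : 0 < y) (hy1 : y < 1) :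
    ∑' m : ℕ, L * (y * r ^ m) / (1 - y * r ^ m) ^ 2
      = L * ∑' k : ℕ, ((k : ℝ) + 1) * y ^ (k + 1) * (1 - r ^ (k + 1))⁻¹ := by
  have hsm := s_mem hr0 hr1 hy0 hy1
  have habs : ∀ m : ℕ, |y * r ^ m| < 1 := fun m => by
    rw [abs_of_nonneg (hsm m).1.le]; exact (hsm m).2
  have hterm : ∀ m : ℕ, L * (y * r ^ m) / (1 - y * r ^ m) ^ 2
      = ∑' j : ℕ, L * (((j : ℝ) + 1) * (y * r ^ m) ^ (j + 1)) := by
    intro m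
    rw [tsum_mul_left, (hasSum1 (habs m)).tsum_eq, mul_div_assoc]
  have hrow : ∀ m : ℕ, Summable (fun j : ℕ => L * (((j : ℝ) + 1) * (y * r ^ m) ^ (j + 1))) :=
    fun m => ((hasSum1 (habs m)).summable).mul_left L
  have hcol : ∀ j : ℕ, Summable (fun m : ℕ => L * (((j : ℝ) + 1) * (y * r ^ m) ^ (j + 1))) := by
    intro j
    apply Summable.of_nonneg_of_le (fun m => ?_) (fun m => ?_)
      ((summable_geometric_of_lt_one hr0.le hr1).mul_left (L * (((j:ℝ)+1) * y ^ (j+1))))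
    · have h1 := (hsm m).1
      positivity
    · rw [mul_pow, pow_right_comm]
      have h5 : (r ^ (j+1)) ^ m ≤ r ^ m := by
        apply pow_le_pow_left₀ (pow_pos hr0 (j+1)).le
        calc r ^ (j+1) = r ^ j * r := by ring
          _ ≤ 1 * r := mul_le_mul_of_nonneg_right (pow_le_one₀ hr0.le hr1.le) hr0.le
          _ = r := one_mul r
      calc L * (((j:ℝ)+1) * (y ^ (j+1) * (r ^ (j+1)) ^ m))
          ≤ L * (((j:ℝ)+1) * (y ^ (j+1) * r ^ m)) := by
            gcongr
        _ = L * (((j:ℝ)+1) * y ^ (j+1)) * r ^ m := by ring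
  have hunc : Summable (Function.uncurry
      (fun m j : ℕ => L * (((j : ℝ) + 1) * (y * r ^ m) ^ (j + 1)))) := by
    apply (summable_prod_of_nonneg ?_).2
    · constructor
      · exact hrow
      · simp only [Function.uncurry]
        have heq : (fun m : ℕ => ∑' j : ℕ, L * (((j : ℝ) + 1) * (y * r ^ m) ^ (j + 1)))
            = fun m : ℕ => L * (y * r ^ m) / (1 - y * r ^ m) ^ 2 :=
          funext fun m => (hterm m).symm
        rw [heq]
        exact summableA hL hr0 hr1 hy0 hy1
    · rintro ⟨m, j⟩
      have h1 := (hsm m).1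
      have : (0:ℝ) ≤ (y * r ^ m) ^ (j+1) := by positivity
      simp only [Function.uncurry]
      positivity
  have hswap := (Summable.tsum_comm' hunc hrow hcol).symm
  have hgeom : ∀ j : ℕ, ∑' m : ℕ, L * (((j : ℝ) + 1) * (y * r ^ m) ^ (j + 1))
      = L * (((j : ℝ) + 1) * y ^ (j + 1) * (1 - r ^ (j + 1))⁻¹) := by
    intro j
    have hr2 : r ^ (j+1) < 1 := pow_lt_one₀ hr0.le hr1 (Nat.succ_ne_zero j)
    have heq : ∀ m : ℕ, L * (((j : ℝ) + 1) * (y * r ^ m) ^ (j + 1))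
        = (L * (((j:ℝ)+1) * y ^ (j+1))) * (r ^ (j+1)) ^ m := by
      intro m
      rw [mul_pow, pow_right_comm]
      ring
    rw [funext heq, tsum_mul_left, tsum_geometric_of_lt_one (pow_pos hr0 (j+1)).le hr2]
    ring
  calc ∑' m : ℕ, L * (y * r ^ m) / (1 - y * r ^ m) ^ 2
      = ∑' m : ℕ, ∑' j : ℕ, L * (((j : ℝ) + 1) * (y * r ^ m) ^ (j + 1)) := tsum_congr hterm
    _ = ∑' j : ℕ, ∑' m : ℕ, L * (((j : ℝ) + 1) * (y * r ^ m) ^ (j + 1)) := hswap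
    _ = ∑' j : ℕ, L * (((j : ℝ) + 1) * y ^ (j + 1) * (1 - r ^ (j + 1))⁻¹) := tsum_congr hgeom
    _ = L * ∑' k : ℕ, ((k : ℝ) + 1) * y ^ (k + 1) * (1 - r ^ (k + 1))⁻¹ := tsum_mul_left

include hL hr0 hr1 in
lemma summableK1 {y : ℝ} (hy0 : 0 < y) (hy1 : y < 1) :
    Summable (fun k : ℕ => ((k : ℝ) + 1) * y ^ (k + 1) * (1 - r ^ (k + 1))⁻¹) := by
  apply Summable.of_nonneg_of_le (fun k => ?_) (fun k => ?_)
    (((hasSum1 (s := y) (by rw [abs_of_nonneg hy0.le]; exact hy1)).summable).mul_left (1 - r)⁻¹)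
  · have h1 : r ^ (k+1) < 1 := pow_lt_one₀ hr0.le hr1 (Nat.succ_ne_zero k)
    have h2 : (0:ℝ) < 1 - r ^ (k+1) := by linarith
    positivity
  · have h1 : r ^ (k+1) ≤ r := by
      calc r ^ (k+1) = r ^ k * r := by ring
        _ ≤ 1 * r := mul_le_mul_of_nonneg_right (pow_le_one₀ hr0.le hr1.le) hr0.le
        _ = r := one_mul r
    have h2 : (0:ℝ) < 1 - r := by linarith
    have h3 : (1 - r ^ (k+1))⁻¹ ≤ (1 - r)⁻¹ := by
      apply inv_anti₀ h2
      linarith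
    calc ((k : ℝ) + 1) * y ^ (k + 1) * (1 - r ^ (k + 1))⁻¹
        ≤ ((k : ℝ) + 1) * y ^ (k + 1) * (1 - r)⁻¹ := by
          apply mul_le_mul_of_nonneg_left h3
          positivity
      _ = (1 - r)⁻¹ * (((k : ℝ) + 1) * y ^ (k + 1)) := by ring

-- tail lower bound
include hL hr0 hr1 in
lemma PhiLB (hrexp : r = Real.exp (-L)) {y : ℝ} (hy0 : 0 < y) (hy1 : y < 1) :
    y / (1 - y) + L / 2 * (y / (1 - y) ^ 2)
      ≤ ∑' m : ℕ, L * (y * r ^ m) / (1 - y * r ^ m) ^ 2 := by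
  rw [fubiniA hL hr0 hr1 hy0 hy1]
  have habs : |y| < 1 := by rw [abs_of_nonneg hy0.le]; exact hy1
  have hgeo : HasSum (fun k : ℕ => y ^ (k + 1)) (y / (1 - y)) := by
    have h := (hasSum_geometric_of_lt_one hy0.le hy1).mul_left y
    have heq : (fun k : ℕ => y * y ^ k) = fun k : ℕ => y ^ (k + 1) := by
      funext k; ring
    rw [heq] at h
    rw [div_eq_mul_inv]
    exact h
  have h2 := (hasSum1 habs).mul_left (L / 2)
  have hsum := hgeo.add h2
  have hterm : ∀ k : ℕ, y ^ (k+1) + L / 2 * (((k:ℝ)+1) * y ^ (k+1))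
      ≤ L * (((k : ℝ) + 1) * y ^ (k + 1) * (1 - r ^ (k + 1))⁻¹) := by
    intro k
    set u : ℝ := ((k:ℝ)+1) * L with hu_def
    have hu : 0 < u := by positivity
    have hrk : r ^ (k+1) = Real.exp (-u) := by
      rw [hrexp, ← Real.exp_nat_mul]
      congr 1
      push_cast
      ring
    have hd : 0 < 1 - r ^ (k+1) := by
      rw [hrk]
      have : Real.exp (-u) < 1 := by
        rw [Real.exp_lt_one_iff]
        linarith
      linarith
    have key := aux_half_bound hu
    rw [hrk] at hd ⊢
    have hyp : (0:ℝ) ≤ y ^ (k+1) := by positivity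
    rw [show L * (((k : ℝ) + 1) * y ^ (k + 1) * (1 - Real.exp (-u))⁻¹)
        = (u * y ^ (k+1)) / (1 - Real.exp (-u)) by rw [div_eq_mul_inv]; ring,
      le_div_iff₀ hd]
    have h8 := mul_le_mul_of_nonneg_right key hyp
    simp only [hu_def] at h8
    nlinarith [h8]
  calc y / (1 - y) + L / 2 * (y / (1 - y) ^ 2)
      = ∑' k : ℕ, (y ^ (k+1) + L / 2 * (((k:ℝ)+1) * y ^ (k+1))) := hsum.tsum_eq.symm
    _ ≤ ∑' k : ℕ, L * (((k : ℝ) + 1) * y ^ (k + 1) * (1 - r ^ (k + 1))⁻¹) := by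
        apply Summable.tsum_le_tsum hterm hsum.summable
        exact (summableK1 hL hr0 hr1 hy0 hy1).mul_left L
    _ = L * ∑' k : ℕ, ((k : ℝ) + 1) * y ^ (k + 1) * (1 - r ^ (k + 1))⁻¹ := tsum_mul_left

include hL hr0 hr1 in
lemma summableB {y : ℝ} (hy0 : 0 < y) (hy1 : y < 1) :
    Summable (fun m : ℕ => L * (y * r ^ m) * (1 + y * r ^ m) / (1 - y * r ^ m) ^ 3) := by
  apply Summable.of_nonneg_of_le (fun m => ?_) (fun m => ?_)
    (((summable_geometric_of_lt_one hr0.le hr1)).mul_left (2 * L * y / (1 - y) ^ 3))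
  · have h := s_mem hr0 hr1 hy0 hy1 m
    have h1 := h.1; have h2 := h.2
    have h3 : (0:ℝ) < 1 - y * r ^ m := by linarith
    positivity
  · have h := s_mem hr0 hr1 hy0 hy1 m
    have h1 := h.1; have h2 := h.2
    have hd1 : (0:ℝ) < 1 - y := by linarith
    have h3 : y * r ^ m ≤ y := by
      have : r ^ m ≤ 1 := pow_le_one₀ hr0.le hr1.le
      nlinarith
    have hbd : (1 - y) ^ 3 ≤ (1 - y * r ^ m) ^ 3 := by
      apply pow_le_pow_left₀ hd1.le
      linarith
    calc L * (y * r ^ m) * (1 + y * r ^ m) / (1 - y * r ^ m) ^ 3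
        ≤ 2 * L * y * r ^ m / (1 - y) ^ 3 := by
          apply div_le_div₀ (by positivity)
            (by nlinarith [mul_nonneg (mul_nonneg hL.le h1.le) (sub_nonneg.2 h2.le)])
            (by positivity) hbd
      _ = 2 * L * y / (1 - y) ^ 3 * r ^ m := by ring

include hL hr0 hr1 in
lemma fubiniB {y : ℝ} (hy0 : 0 < y) (hy1 : y < 1) :
    ∑' m : ℕ, L * (y * r ^ m) * (1 + y * r ^ m) / (1 - y * r ^ m) ^ 3
      = L * ∑' k : ℕ, ((k : ℝ) + 1) ^ 2 * y ^ (k + 1) * (1 - r ^ (k + 1))⁻¹ := by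
  have hsm := s_mem hr0 hr1 hy0 hy1
  have habs : ∀ m : ℕ, |y * r ^ m| < 1 := fun m => by
    rw [abs_of_nonneg (hsm m).1.le]; exact (hsm m).2
  have hterm : ∀ m : ℕ, L * (y * r ^ m) * (1 + y * r ^ m) / (1 - y * r ^ m) ^ 3
      = ∑' j : ℕ, L * (((j : ℝ) + 1) ^ 2 * (y * r ^ m) ^ (j + 1)) := by
    intro m
    rw [tsum_mul_left, (hasSum2 (habs m)).tsum_eq]
    ring
  have hrow : ∀ m : ℕ, Summable (fun j : ℕ => L * (((j : ℝ) + 1) ^ 2 * (y * r ^ m) ^ (j + 1))) :=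
    fun m => ((hasSum2 (habs m)).summable).mul_left L
  have hcol : ∀ j : ℕ, Summable (fun m : ℕ => L * (((j : ℝ) + 1) ^ 2 * (y * r ^ m) ^ (j + 1))) := by
    intro j
    apply Summable.of_nonneg_of_le (fun m => ?_) (fun m => ?_)
      ((summable_geometric_of_lt_one hr0.le hr1).mul_left (L * (((j:ℝ)+1) ^ 2 * y ^ (j+1))))
    · have h1 := (hsm m).1
      positivity
    · rw [mul_pow, pow_right_comm]
      have h5 : (r ^ (j+1)) ^ m ≤ r ^ m := by
        apply pow_le_pow_left₀ (pow_pos hr0 (j+1)).le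
        calc r ^ (j+1) = r ^ j * r := by ring
          _ ≤ 1 * r := mul_le_mul_of_nonneg_right (pow_le_one₀ hr0.le hr1.le) hr0.le
          _ = r := one_mul r
      calc L * (((j:ℝ)+1) ^ 2 * (y ^ (j+1) * (r ^ (j+1)) ^ m))
          ≤ L * (((j:ℝ)+1) ^ 2 * (y ^ (j+1) * r ^ m)) := by gcongr
        _ = L * (((j:ℝ)+1) ^ 2 * y ^ (j+1)) * r ^ m := by ring
  have hunc : Summable (Function.uncurry
      (fun m j : ℕ => L * (((j : ℝ) + 1) ^ 2 * (y * r ^ m) ^ (j + 1)))) := by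
    apply (summable_prod_of_nonneg ?_).2
    · refine ⟨hrow, ?_⟩
      simp only [Function.uncurry]
      have heq : (fun m : ℕ => ∑' j : ℕ, L * (((j : ℝ) + 1) ^ 2 * (y * r ^ m) ^ (j + 1)))
          = fun m : ℕ => L * (y * r ^ m) * (1 + y * r ^ m) / (1 - y * r ^ m) ^ 3 :=
        funext fun m => (hterm m).symm
      rw [heq]
      exact summableB hL hr0 hr1 hy0 hy1
    · rintro ⟨m, j⟩
      have h1 := (hsm m).1
      simp only [Function.uncurry]
      positivity
  have hswap := (Summable.tsum_comm' hunc hrow hcol).symm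
  have hgeom : ∀ j : ℕ, ∑' m : ℕ, L * (((j : ℝ) + 1) ^ 2 * (y * r ^ m) ^ (j + 1))
      = L * (((j : ℝ) + 1) ^ 2 * y ^ (j + 1) * (1 - r ^ (j + 1))⁻¹) := by
    intro j
    have hr2 : r ^ (j+1) < 1 := pow_lt_one₀ hr0.le hr1 (Nat.succ_ne_zero j)
    have heq : ∀ m : ℕ, L * (((j : ℝ) + 1) ^ 2 * (y * r ^ m) ^ (j + 1))
        = (L * (((j:ℝ)+1) ^ 2 * y ^ (j+1))) * (r ^ (j+1)) ^ m := by
      intro m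
      rw [mul_pow, pow_right_comm]
      ring
    rw [funext heq, tsum_mul_left, tsum_geometric_of_lt_one (pow_pos hr0 (j+1)).le hr2]
    ring
  calc ∑' m : ℕ, L * (y * r ^ m) * (1 + y * r ^ m) / (1 - y * r ^ m) ^ 3
      = ∑' m : ℕ, ∑' j : ℕ, L * (((j : ℝ) + 1) ^ 2 * (y * r ^ m) ^ (j + 1)) := tsum_congr hterm
    _ = ∑' j : ℕ, ∑' m : ℕ, L * (((j : ℝ) + 1) ^ 2 * (y * r ^ m) ^ (j + 1)) := hswap
    _ = ∑' j : ℕ, L * (((j : ℝ) + 1) ^ 2 * y ^ (j + 1) * (1 - r ^ (j + 1))⁻¹) := tsum_congr hgeom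
    _ = L * ∑' k : ℕ, ((k : ℝ) + 1) ^ 2 * y ^ (k + 1) * (1 - r ^ (k + 1))⁻¹ := tsum_mul_left

end

theorem key_ineq {L r t : ℝ} (hL : 0 < L) (hr0 : 0 < r) (hr1 : r < 1)
    (hrexp : r = Real.exp (-L)) (ht0 : 0 < t) (ht1 : t < 1) :
    L * ∑' k : ℕ, ((k : ℝ) + 1) ^ 2 * t ^ (k + 1) * (1 - r ^ (k + 1))⁻¹ <
      (1 + L * ∑' k : ℕ, ((k : ℝ) + 1) * t ^ (k + 1) * (1 - r ^ (k + 1))⁻¹) ^ 2 := by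
  have hrL : 1 - r ≤ L := by
    have h := Real.add_one_le_exp (-L)
    rw [← hrexp] at h
    linarith
  set a : ℕ → ℝ := fun m => L * (t * r ^ m) / (1 - t * r ^ m) ^ 2 with ha_def
  set b : ℕ → ℝ := fun m => L * (t * r ^ m) * (1 + t * r ^ m) / (1 - t * r ^ m) ^ 3 with hb_def
  have hsm := s_mem hr0 hr1 ht0 ht1
  have ha0 : ∀ m, 0 ≤ a m := by
    intro m
    have h1 := (hsm m).1
    have h2 := (hsm m).2
    simp only [ha_def]
    positivity
  have hb0 : ∀ m, 0 ≤ b m := by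
    intro m
    have h1 := (hsm m).1
    have h2 := (hsm m).2
    have h3 : (0:ℝ) < 1 - t * r ^ m := by linarith
    simp only [hb_def]
    positivity
  have ha : Summable a := summableA hL hr0 hr1 ht0 ht1
  set Q : ℕ → ℝ := fun m => ∑' n : ℕ, a (n + m) with hQ_def
  have haShift : ∀ m : ℕ, Summable (fun n => a (n + m)) := fun m =>
    (summable_nat_add_iff m).2 ha
  have hQ0 : Q 0 = ∑' m, a m := by simp [hQ_def]
  have hQrec : ∀ m : ℕ, Q m = a m + Q (m + 1) := by
    intro m
    have h := Summable.tsum_eq_zero_add (haShift m)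
    simp only [hQ_def]
    rw [h]
    congr 1
    · simp
    · apply tsum_congr
      intro n
      congr 1
      omega
  have hQnn : ∀ m, 0 ≤ Q m := fun m => tsum_nonneg (fun n => ha0 _)
  set S : ℝ := ∑' m, a m with hS_def
  -- tail lower bound
  have hQlb : ∀ m : ℕ, (t * r ^ (m+1)) / (1 - t * r ^ (m+1))
      + L / 2 * ((t * r ^ (m+1)) / (1 - t * r ^ (m+1)) ^ 2) ≤ Q (m + 1) := by
    intro m
    have hy0' := (hsm (m+1)).1
    have hy1' := (hsm (m+1)).2
    have h := PhiLB hL hr0 hr1 hrexp hy0' hy1'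
    have heq : ∑' n : ℕ, L * ((t * r ^ (m+1)) * r ^ n) / (1 - (t * r ^ (m+1)) * r ^ n) ^ 2
        = Q (m+1) := by
      simp only [hQ_def, ha_def]
      apply tsum_congr
      intro n
      have : t * r ^ (m + 1) * r ^ n = t * r ^ (n + (m + 1)) := by
        rw [pow_add]
        ring
      rw [this]
    rwa [heq] at h
  -- key pointwise inequality
  have hkey : ∀ m : ℕ, b m ≤ 2 * a m + (Q m ^ 2 - Q (m + 1) ^ 2) := by
    intro m
    have hy0' := (hsm m).1
    have hy1' := (hsm m).2
    set y : ℝ := t * r ^ m with hy_def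
    have hQm : Q m ^ 2 - Q (m+1) ^ 2 = a m ^ 2 + 2 * a m * Q (m+1) := by
      rw [hQrec m]
      ring
    rw [hQm]
    have hry : t * r ^ (m + 1) = r * y := by
      simp only [hy_def]
      rw [pow_succ]
      ring
    set W : ℝ := (r * y) / (1 - r * y) + L / 2 * ((r * y) / (1 - r * y) ^ 2) with hW_def
    have hWle : W ≤ Q (m+1) := by
      have := hQlb m
      rwa [hry] at this
    have hd1 : (0:ℝ) < 1 - y := by linarith
    have hry0 : 0 < r * y := mul_pos hr0 hy0'
    have hry1 : r * y < 1 := by nlinarith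
    have hd2 : (0:ℝ) < 1 - r * y := by linarith
    -- main explicit inequality : b m ≤ 2 a m + a m ^2 + 2 a m * W
    have hmain : b m ≤ 2 * a m + a m ^ 2 + 2 * a m * W := by
      simp only [hb_def, ha_def, hW_def, ← hy_def]
      rw [← sub_nonneg]
      have hnum : (1 - r) * y * (1 - r*y)^2 + 2*r*y*(1-y)^2*(1 - r*y) + (1-r)*r*y*(1-y)^2
          ≤ L * y * (1 - r*y)^2 + 2*r*y*(1-y)^2*(1 - r*y) + L*r*y*(1-y)^2 := by
        have h1 : (1 - r) * y * (1 - r*y)^2 ≤ L * y * (1 - r*y)^2 := by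
          apply mul_le_mul_of_nonneg_right _ (by positivity)
          apply mul_le_mul_of_nonneg_right hrL hy0'.le
        have h2 : (1-r)*r*y*(1-y)^2 ≤ L*r*y*(1-y)^2 := by
          apply mul_le_mul_of_nonneg_right _ (by positivity)
          have : (0:ℝ) ≤ r * y := hry0.le
          nlinarith
        linarith
      have hpoly := (aux_poly hr0.le hr1.le hy0'.le hy1'.le).trans hnum
      have hexp : 2 * (L * y / (1 - y) ^ 2) + (L * y / (1 - y) ^ 2) ^ 2
            + 2 * (L * y / (1 - y) ^ 2) * ((r * y) / (1 - r * y) + L / 2 * ((r * y) / (1 - r * y) ^ 2))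
            - L * y * (1 + y) / (1 - y) ^ 3
          = (L * y * (L * y * (1 - r*y)^2 + 2*r*y*(1-y)^2*(1 - r*y) + L*r*y*(1-y)^2
              - (3*y - 1) * (1 - y) * (1 - r*y)^2)) / ((1-y)^4 * (1 - r*y)^2) := by
        have hn1 : (1 - y) ≠ 0 := hd1.ne'
        have hn2 : (1 - r * y) ≠ 0 := hd2.ne'
        generalize hc : 1 - r * y = c at hn2 ⊢
        generalize hd : 1 - y = d at hn1 ⊢
        field_simp
        rw [← hc, ← hd]
        ring
      rw [hexp]
      apply div_nonneg _ (by positivity)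
      apply mul_nonneg (by positivity)
      linarith
    have haW : 2 * a m * W ≤ 2 * a m * Q (m+1) := by
      apply mul_le_mul_of_nonneg_left hWle
      have := ha0 m
      linarith
    linarith
  -- sum up
  have hsum_le : ∑' m, b m ≤ 2 * S + S ^ 2 := by
    apply Real.tsum_le_of_sum_range_le hb0
    intro M
    calc ∑ m ∈ Finset.range M, b m
        ≤ ∑ m ∈ Finset.range M, (2 * a m + (Q m ^ 2 - Q (m + 1) ^ 2)) :=
          Finset.sum_le_sum (fun m _ => hkey m)
      _ = 2 * ∑ m ∈ Finset.range M, a m + (Q 0 ^ 2 - Q M ^ 2) := by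
          rw [Finset.sum_add_distrib, Finset.sum_range_sub' (fun m => Q m ^ 2), ← Finset.mul_sum]
      _ ≤ 2 * S + S ^ 2 := by
          have h1 : ∑ m ∈ Finset.range M, a m ≤ S := Summable.sum_le_tsum (Finset.range M) (fun m _ => ha0 m) ha
          have h2 : Q 0 = S := by rw [hQ0, hS_def]
          have h3 : 0 ≤ Q M ^ 2 := sq_nonneg _
          nlinarith [hQnn 0]
  have hSb : ∑' m, b m = L * ∑' k : ℕ, ((k : ℝ) + 1) ^ 2 * t ^ (k + 1) * (1 - r ^ (k + 1))⁻¹ :=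
    fubiniB hL hr0 hr1 ht0 ht1
  have hSa : S = L * ∑' k : ℕ, ((k : ℝ) + 1) * t ^ (k + 1) * (1 - r ^ (k + 1))⁻¹ :=
    fubiniA hL hr0 hr1 ht0 ht1
  rw [← hSb, ← hSa]
  have hS0 : 0 ≤ S := tsum_nonneg ha0
  nlinarith [hsum_le]


lemma summable_coef_geom {C L σ : ℝ} (hC : 0 ≤ C) (hL : 0 < L) (hσ : 0 < σ) (p : ℕ) :
    Summable (fun k : ℕ => C * ((k:ℝ) + 1) ^ p * Real.exp (-(((k:ℝ) + 1) * L * σ))) := by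
  set ρ : ℝ := Real.exp (-(L * σ)) with hρ_def
  have hρ0 : 0 < ρ := Real.exp_pos _
  have hρ1 : ρ < 1 := by
    rw [hρ_def, Real.exp_lt_one_iff]
    nlinarith
  have hbase : Summable (fun n : ℕ => (n:ℝ) ^ p * ρ ^ n) :=
    summable_pow_mul_geometric_of_norm_lt_one p (by rw [Real.norm_eq_abs, abs_of_pos hρ0]; exact hρ1)
  have hsh : Summable (fun k : ℕ => ((k:ℝ) + 1) ^ p * ρ ^ (k + 1)) := by
    have := (summable_nat_add_iff 1).2 hbase
    exact_mod_cast this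
  have heq : ∀ k : ℕ, C * ((k:ℝ) + 1) ^ p * Real.exp (-(((k:ℝ) + 1) * L * σ))
      = C * (((k:ℝ) + 1) ^ p * ρ ^ (k + 1)) := by
    intro k
    rw [hρ_def, ← Real.exp_nat_mul]
    push_cast
    rw [show ((k:ℝ) + 1) * -(L * σ) = -(((k:ℝ) + 1) * L * σ) by ring]
    ring
  rw [funext heq]
  exact hsh.mul_left C

lemma hasDerivAt_tsum_expSeries {L : ℝ} (hL : 0 < L) (e : ℕ → ℝ) (C : ℝ) (p : ℕ)
    (he : ∀ k, |e k| ≤ C * ((k:ℝ) + 1) ^ p) {σ x : ℝ} (hσ : 0 < σ) (hx : σ < x) :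
    HasDerivAt (fun y => ∑' k : ℕ, e k * Real.exp (-(((k:ℝ) + 1) * L * y)))
      (∑' k : ℕ, (-(((k:ℝ) + 1) * L) * e k) * Real.exp (-(((k:ℝ) + 1) * L * x))) x := by
  have hC : 0 ≤ C := by
    have h := (abs_nonneg (e 0)).trans (he 0)
    simpa using h
  apply hasDerivAt_of_tendstoUniformlyOn (l := (atTop : Filter (Finset ℕ)))
    (f := fun (T : Finset ℕ) (y : ℝ) =>
      ∑ k ∈ T, e k * Real.exp (-(((k:ℝ) + 1) * L * y)))
    (f' := fun (T : Finset ℕ) (y : ℝ) =>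
      ∑ k ∈ T, (-(((k:ℝ) + 1) * L) * e k) * Real.exp (-(((k:ℝ) + 1) * L * y)))
    (isOpen_Ioi (a := σ)) ?_ ?_ ?_ (by exact hx : x ∈ Ioi σ)
  · -- uniform convergence of derivative partial sums
    apply tendstoUniformlyOn_tsum
      (u := fun k : ℕ => (C * L) * ((k:ℝ) + 1) ^ (p + 1) * Real.exp (-(((k:ℝ) + 1) * L * σ)))
      (summable_coef_geom (by positivity) hL hσ (p + 1))
    intro k y hy
    have hy' : σ < y := hy
    have hexp : Real.exp (-(((k:ℝ) + 1) * L * y)) ≤ Real.exp (-(((k:ℝ) + 1) * L * σ)) := by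
      apply Real.exp_le_exp.2
      have : ((k:ℝ) + 1) * L > 0 := by positivity
      nlinarith
    rw [Real.norm_eq_abs, abs_mul, Real.abs_exp, abs_mul, abs_neg, abs_mul]
    have h1 : |((k:ℝ) + 1)| = ((k:ℝ) + 1) := abs_of_pos (by positivity)
    have h2 : |L| = L := abs_of_pos hL
    rw [h1, h2]
    calc ((k:ℝ) + 1) * L * |e k| * Real.exp (-(((k:ℝ) + 1) * L * y))
        ≤ ((k:ℝ) + 1) * L * (C * ((k:ℝ) + 1) ^ p) * Real.exp (-(((k:ℝ) + 1) * L * σ)) := by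
          apply mul_le_mul _ hexp (Real.exp_pos _).le (by positivity)
          apply mul_le_mul_of_nonneg_left (he k) (by positivity)
      _ = C * L * ((k:ℝ) + 1) ^ (p + 1) * Real.exp (-(((k:ℝ) + 1) * L * σ)) := by ring
  · -- each partial sum differentiable
    filter_upwards with T y _
    apply HasDerivAt.fun_sum
    intro k _
    have hinner : HasDerivAt (fun y : ℝ => -(((k:ℝ) + 1) * L * y)) (-(((k:ℝ) + 1) * L)) y := by
      exact ((hasDerivAt_id y).const_mul (((k:ℝ) + 1) * L)).neg.congr_deriv (by ring)
    have hexp := (Real.hasDerivAt_exp (-(((k:ℝ) + 1) * L * y))).comp y hinner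
    have := hexp.const_mul (e k)
    exact this.congr_deriv (by ring)
  · -- pointwise convergence
    intro y hy
    have hsum : Summable (fun k : ℕ => e k * Real.exp (-(((k:ℝ) + 1) * L * y))) := by
      apply Summable.of_norm_bounded (summable_coef_geom hC hL hσ p)
      intro k
      rw [Real.norm_eq_abs, abs_mul, Real.abs_exp]
      have hexp : Real.exp (-(((k:ℝ) + 1) * L * y)) ≤ Real.exp (-(((k:ℝ) + 1) * L * σ)) := by
        apply Real.exp_le_exp.2
        have h3 : ((k:ℝ) + 1) * L > 0 := by positivity
        have : σ < y := hy
        nlinarith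
      calc |e k| * Real.exp (-(((k:ℝ) + 1) * L * y))
          ≤ (C * ((k:ℝ) + 1) ^ p) * Real.exp (-(((k:ℝ) + 1) * L * σ)) :=
            mul_le_mul (he k) hexp (Real.exp_pos _).le (by positivity)
        _ = C * ((k:ℝ) + 1) ^ p * Real.exp (-(((k:ℝ) + 1) * L * σ)) := by ring
    exact hsum.hasSum

/-- For `q > 1` and `x > 0`, `(ψ_q′(x))² + ψ_q″(x) > 0`. -/
theorem positivity_q_gt_one (q : ℝ) (hq : 1 < q) (x : ℝ) (hx : 0 < x) :
    0 < (deriv (qDigammaGt q) x) ^ 2 + deriv (deriv (qDigammaGt q)) x := by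
  have hq0 : (0:ℝ) < q := by linarith
  set L : ℝ := Real.log q with hL_def
  have hL : 0 < L := Real.log_pos hq
  set r : ℝ := Real.exp (-L) with hr_def
  have hr0 : 0 < r := Real.exp_pos _
  have hr1 : r < 1 := by rw [hr_def, Real.exp_lt_one_iff]; linarith
  set e : ℕ → ℝ := fun k => (1 - q ^ (-((k : ℝ) + 1)))⁻¹ with he_def
  have hqk : ∀ k : ℕ, q ^ (-((k : ℝ) + 1)) = Real.exp (-(((k:ℝ) + 1) * L)) := by
    intro k
    rw [Real.rpow_def_of_pos hq0]
    congr 1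
    ring
  have hqk_lt : ∀ k : ℕ, q ^ (-((k : ℝ) + 1)) ≤ r := by
    intro k
    rw [hqk k, hr_def]
    apply Real.exp_le_exp.2
    have : (0:ℝ) ≤ (k:ℝ) := Nat.cast_nonneg k
    nlinarith
  have hek_pos : ∀ k : ℕ, 0 < 1 - q ^ (-((k : ℝ) + 1)) := by
    intro k
    have := hqk_lt k
    linarith
  set C : ℝ := (1 - r)⁻¹ with hC_def
  have hC0 : 0 < C := by rw [hC_def]; exact inv_pos.2 (by linarith)
  have heC : ∀ k, |e k| ≤ C * ((k:ℝ) + 1) ^ 0 := by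
    intro k
    simp only [pow_zero, mul_one, he_def]
    rw [abs_of_pos (inv_pos.2 (hek_pos k))]
    rw [hC_def]
    apply inv_anti₀ (by linarith)
    linarith [hqk_lt k]
  -- rewrite qDigammaGt as exp series
  have hterm : ∀ (y : ℝ) (k : ℕ), q ^ (-(((k : ℝ) + 1) * y)) / (1 - q ^ (-((k : ℝ) + 1)))
      = e k * Real.exp (-(((k:ℝ) + 1) * L * y)) := by
    intro y k
    rw [Real.rpow_def_of_pos hq0 (-(((k : ℝ) + 1) * y)), div_eq_inv_mul]
    congr 1
    rw [hL_def]
    congr 1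
    ring
  have hψ : qDigammaGt q = fun y => -Real.log (q - 1)
      + L * (y - 1/2 - ∑' k : ℕ, e k * Real.exp (-(((k:ℝ) + 1) * L * y))) := by
    funext y
    unfold qDigammaGt
    rw [← hL_def, tsum_congr (fun k => hterm y k)]
  set e' : ℕ → ℝ := fun k => -(((k:ℝ) + 1) * L) * e k with he'_def
  set D1 : ℝ → ℝ := fun y =>
    L * (1 - ∑' k : ℕ, e' k * Real.exp (-(((k:ℝ) + 1) * L * y))) with hD1_def
  have hD1 : ∀ y : ℝ, 0 < y → HasDerivAt (qDigammaGt q) (D1 y) y := by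
    intro y hy
    rw [hψ]
    have hts := hasDerivAt_tsum_expSeries hL e C 0 heC (by linarith : (0:ℝ) < y/2)
      (by linarith : y/2 < y)
    have hbase := (((hasDerivAt_id y).sub_const (1/2 : ℝ)).sub hts).const_mul L
    have h := hbase.const_add (-Real.log (q - 1))
    exact h
  have hD1eq : Set.EqOn (deriv (qDigammaGt q)) D1 (Ioi 0) := fun y hy => (hD1 y hy).deriv
  have he'C : ∀ k, |e' k| ≤ (C * L) * ((k:ℝ) + 1) ^ 1 := by
    intro k
    simp only [he'_def]
    rw [abs_mul, abs_neg, abs_mul]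
    have h1 : |((k:ℝ) + 1)| = (k:ℝ) + 1 := abs_of_pos (by positivity)
    have h2 : |L| = L := abs_of_pos hL
    rw [h1, h2, pow_one]
    calc ((k:ℝ) + 1) * L * |e k| ≤ ((k:ℝ) + 1) * L * C := by
          apply mul_le_mul_of_nonneg_left _ (by positivity)
          simpa using heC k
      _ = C * L * ((k:ℝ) + 1) := by ring
  have hts2 := hasDerivAt_tsum_expSeries hL e' (C * L) 1 he'C
    (by linarith : (0:ℝ) < x/2) (by linarith : x/2 < x)
  have hD2 : HasDerivAt D1
      (L * -∑' k : ℕ, (-(((k:ℝ) + 1) * L) * e' k) * Real.exp (-(((k:ℝ) + 1) * L * x))) x := by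
    simp only [hD1_def]
    exact ((hts2.const_sub 1).const_mul L)
  have hdd : deriv (deriv (qDigammaGt q)) x = deriv D1 x := by
    apply Filter.EventuallyEq.deriv_eq
    exact Filter.eventuallyEq_of_mem (isOpen_Ioi.mem_nhds hx) hD1eq
  rw [hdd, hD2.deriv, hD1eq hx]
  simp only [hD1_def]
  -- now express everything via t
  set t : ℝ := Real.exp (-(L * x)) with ht_def
  have ht0 : 0 < t := Real.exp_pos _
  have ht1 : t < 1 := by
    rw [ht_def, Real.exp_lt_one_iff]
    nlinarith
  have htk : ∀ k : ℕ, Real.exp (-(((k:ℝ) + 1) * L * x)) = t ^ (k + 1) := by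
    intro k
    rw [ht_def, ← Real.exp_nat_mul]
    congr 1
    push_cast
    ring
  have hrk : ∀ k : ℕ, q ^ (-((k : ℝ) + 1)) = r ^ (k + 1) := by
    intro k
    rw [hqk k, hr_def, ← Real.exp_nat_mul]
    congr 1
    push_cast
    ring
  have hP1 : ∑' k : ℕ, e' k * Real.exp (-(((k:ℝ) + 1) * L * x))
      = -(L * ∑' k : ℕ, ((k : ℝ) + 1) * t ^ (k + 1) * (1 - r ^ (k + 1))⁻¹) := by
    rw [← tsum_mul_left, ← tsum_neg]
    apply tsum_congr
    intro k
    simp only [he'_def, he_def]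
    rw [htk k, hrk k]
    ring
  have hP2 : ∑' k : ℕ, (-(((k:ℝ) + 1) * L) * e' k) * Real.exp (-(((k:ℝ) + 1) * L * x))
      = L^2 * ∑' k : ℕ, ((k : ℝ) + 1) ^ 2 * t ^ (k + 1) * (1 - r ^ (k + 1))⁻¹ := by
    rw [← tsum_mul_left]
    apply tsum_congr
    intro k
    simp only [he'_def, he_def]
    rw [htk k, hrk k]
    ring
  rw [hP1, hP2]
  have hkey := key_ineq hL hr0 hr1 hr_def ht0 ht1
  set Sig1 : ℝ := ∑' k : ℕ, ((k : ℝ) + 1) * t ^ (k + 1) * (1 - r ^ (k + 1))⁻¹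
  set Sig2 : ℝ := ∑' k : ℕ, ((k : ℝ) + 1) ^ 2 * t ^ (k + 1) * (1 - r ^ (k + 1))⁻¹
  have hfact : (L * (1 - -(L * Sig1))) ^ 2 + L * -(L ^ 2 * Sig2)
      = L^2 * ((1 + L * Sig1)^2 - L * Sig2) := by ring
  rw [hfact]
  apply mul_pos (by positivity)
  linarith
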